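/- Let U be a universal operator on a separable infinite-dimensional complex Hilbert space H. Then there exists r > 0 such that every λ ∈ ℂ with |λ| < r is an eigenvalue of U of infinite multiplicity, i.e. the kernel Ker(U − λI) is an infinite-dimensional subspace of H. In particular, the open disk B(0,r) is contained in the spectrum σ(U; H), so 0 is an interior point of σ(U; H), of the point spectrum of U, and of the essential spectrum of U. -/

import Mathlib

noncomputable section

/-- Universal operator on a complex Hilbert space. -/
def IsUniversal {H : Type*} [NormedAddCommGroup H] [InnerProductSpace ℂ H]
    (U : H →L[ℂ] H) : Prop :=
  ∀ T : H →L[ℂ] H, ∃ M : Submodule ℂ H, IsClosed (M : Set H) ∧ (∀ x ∈ M, U x ∈ M) ∧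
    ∃ c : ℂ, c ≠ 0 ∧ ∃ J : H ≃L[ℂ] M, ∀ x : H, U (J x : H) = c • ((J (T x) : H))

/-- The point spectrum of an operator: the set of its eigenvalues. -/
def pointSpectrum {H : Type*} [NormedAddCommGroup H] [InnerProductSpace ℂ H]
    (T : H →L[ℂ] H) : Set ℂ :=
  {z : ℂ | LinearMap.ker ((T - z • (1 : H →L[ℂ] H) : H →L[ℂ] H) : H →ₗ[ℂ] H) ≠ ⊥}

/-- A bounded operator is Fredholm if its kernel is finite-dimensional and its range is
closed of finite codimension. -/
def IsFredholmOp {H : Type*} [NormedAddCommGroup H] [InnerProductSpace ℂ H]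
    (S : H →L[ℂ] H) : Prop :=
  FiniteDimensional ℂ (LinearMap.ker (S : H →ₗ[ℂ] H)) ∧ IsClosed (LinearMap.range (S : H →ₗ[ℂ] H) : Set H) ∧
    FiniteDimensional ℂ (H ⧸ LinearMap.range (S : H →ₗ[ℂ] H))

/-- The essential spectrum of an operator. -/
def essentialSpectrum {H : Type*} [NormedAddCommGroup H] [InnerProductSpace ℂ H]
    (T : H →L[ℂ] H) : Set ℂ :=
  {z : ℂ | ¬ IsFredholmOp (T - z • (1 : H →L[ℂ] H))}

open scoped ENNReal

namespace UniversalProof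

variable {ι : Type*}

lemma summable_sq (f : lp (fun _ : ι => ℂ) 2) :
    Summable (fun i => ‖f i‖ ^ (2 : ℝ≥0∞).toReal) := by
  have h := lp.memℓp f
  rwa [memℓp_gen_iff (by norm_num)] at h

lemma memℓp_shift (σ : ι → ι) (hσ : Function.Injective σ) (f : lp (fun _ : ι => ℂ) 2) :
    Memℓp (fun i => f (σ i)) (2 : ℝ≥0∞) :=
  memℓp_gen ((summable_sq f).comp_injective hσ)

def shiftL (σ : ι → ι) (hσ : Function.Injective σ) :
    lp (fun _ : ι => ℂ) 2 →ₗ[ℂ] lp (fun _ : ι => ℂ) 2 where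
  toFun f := ⟨fun i => f (σ i), memℓp_shift σ hσ f⟩
  map_add' f g := by
    apply lp.ext
    funext i
    simp [lp.coeFn_add]
    rfl
  map_smul' c f := by
    apply lp.ext
    funext i
    simp [lp.coeFn_smul]

lemma norm_shiftL_le (σ : ι → ι) (hσ : Function.Injective σ) (f : lp (fun _ : ι => ℂ) 2) :
    ‖shiftL σ hσ f‖ ≤ ‖f‖ := by
  have h2 : (0:ℝ) < (2 : ℝ≥0∞).toReal := by norm_num
  rw [← Real.rpow_le_rpow_iff (norm_nonneg _) (norm_nonneg _) h2,
    lp.norm_rpow_eq_tsum h2, lp.norm_rpow_eq_tsum h2]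
  exact Summable.tsum_le_tsum_of_inj σ hσ (fun c _ => by positivity) (fun i => le_rfl)
    ((summable_sq f).comp_injective hσ) (summable_sq f)

def shiftCLM (σ : ι → ι) (hσ : Function.Injective σ) :
    lp (fun _ : ι => ℂ) 2 →L[ℂ] lp (fun _ : ι => ℂ) 2 :=
  LinearMap.mkContinuous (shiftL σ hσ) 1 (fun f => by
    simpa using norm_shiftL_le σ hσ f)

lemma shiftCLM_apply (σ : ι → ι) (hσ : Function.Injective σ) (f : lp (fun _ : ι => ℂ) 2)
    (i : ι) : (shiftCLM σ hσ f : ∀ _ : ι, ℂ) i = f (σ i) := rfl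

def σq (q : ι ≃ ℕ × ℕ) : ι → ι := fun i => q.symm ((q i).1 + 1, (q i).2)

lemma σq_inj (q : ι ≃ ℕ × ℕ) : Function.Injective (σq q) := by
  intro a b h
  have h' := q.symm.injective h
  have h1 : (q a).1 = (q b).1 := by
    have := congrArg Prod.fst h'
    simpa using this
  have h2 : (q a).2 = (q b).2 := by
    have := congrArg Prod.snd h'
    simpa using this
  apply q.injective
  exact Prod.ext h1 h2

def eigFun (q : ι ≃ ℕ × ℕ) (z : ℂ) (k : ℕ) : ∀ _ : ι, ℂ :=
  fun i => if (q i).2 = k then z ^ (q i).1 else 0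

lemma memℓp_eigFun (q : ι ≃ ℕ × ℕ) {z : ℂ} (hz : ‖z‖ < 1) (k : ℕ) :
    Memℓp (eigFun q z k) (2 : ℝ≥0∞) := by
  apply memℓp_gen
  have hinj : Function.Injective (fun n : ℕ => q.symm (n, k)) := by
    intro a b h
    simpa using congrArg Prod.fst (q.symm.injective h)
  have hzero : ∀ i, i ∉ Set.range (fun n : ℕ => q.symm (n, k)) →
      ‖eigFun q z k i‖ ^ (2 : ℝ≥0∞).toReal = 0 := by
    intro i hi
    have hne : (q i).2 ≠ k := by
      intro hk
      exact hi ⟨(q i).1, by rw [← hk]; simp⟩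
    simp [eigFun, hne, Real.zero_rpow (by norm_num : (2 : ℝ≥0∞).toReal ≠ 0)]
  refine (Function.Injective.summable_iff hinj hzero).mp ?_
  have key : ((fun i => ‖eigFun q z k i‖ ^ (2 : ℝ≥0∞).toReal) ∘ fun n : ℕ => q.symm (n, k))
      = fun n => (‖z‖ ^ (2 : ℝ≥0∞).toReal) ^ n := by
    funext n
    have h1 : eigFun q z k (q.symm (n, k)) = z ^ n := by simp [eigFun]
    simp only [Function.comp_apply, h1, norm_pow]
    rw [← Real.rpow_natCast (‖z‖ ^ (2 : ℝ≥0∞).toReal) n, ← Real.rpow_natCast ‖z‖ n,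
      ← Real.rpow_mul (norm_nonneg z), ← Real.rpow_mul (norm_nonneg z), mul_comm]
  rw [key]
  exact summable_geometric_of_lt_one (by positivity)
    (Real.rpow_lt_one (norm_nonneg z) hz (by norm_num))

def eig (q : ι ≃ ℕ × ℕ) {z : ℂ} (hz : ‖z‖ < 1) (k : ℕ) : lp (fun _ : ι => ℂ) 2 :=
  ⟨eigFun q z k, memℓp_eigFun q hz k⟩

def evalLM (pt : ι) : lp (fun _ : ι => ℂ) 2 →ₗ[ℂ] ℂ where
  toFun f := f pt
  map_add' f g := by simp only []; rw [lp.coeFn_add]; rfl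
  map_smul' c f := by simp only [RingHom.id_apply]; rw [lp.coeFn_smul]; rfl

lemma eig_li (q : ι ≃ ℕ × ℕ) {z : ℂ} (hz : ‖z‖ < 1) :
    LinearIndependent ℂ (fun k : ℕ => eig q hz k) := by
  rw [linearIndependent_iff']
  intro s g hsum k hk
  have h0 := congrArg (evalLM (q.symm (0, k))) hsum
  rw [map_sum, map_zero] at h0
  have hterm : ∀ j, evalLM (q.symm (0, k)) (g j • eig q hz j)
      = if j = k then g j else 0 := by
    intro j
    rw [map_smul]
    have hv : (eig q hz j : ∀ _ : ι, ℂ) (q.symm (0, k)) = if j = k then 1 else 0 := by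
      simp [eig, eigFun, eq_comm]
    show g j • (eig q hz j : ∀ _ : ι, ℂ) (q.symm (0, k)) = _
    rw [hv]
    simp [smul_eq_mul, mul_ite]
  rw [Finset.sum_congr rfl (fun j _ => hterm j), Finset.sum_ite_eq' s k g, if_pos hk] at h0
  exact h0

lemma shift_eig (q : ι ≃ ℕ × ℕ) {z : ℂ} (hz : ‖z‖ < 1) (k : ℕ) :
    shiftCLM (σq q) (σq_inj q) (eig q hz k) = z • eig q hz k := by
  apply lp.ext
  funext i
  rw [lp.coeFn_smul]
  have hq : q (σq q i) = ((q i).1 + 1, (q i).2) := Equiv.apply_symm_apply q _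
  show eigFun q z k (σq q i) = z • (eig q hz k : ∀ _ : ι, ℂ) i
  show (if (q (σq q i)).2 = k then z ^ (q (σq q i)).1 else 0)
      = z • (if (q i).2 = k then z ^ (q i).1 else 0)
  rw [hq]
  by_cases h : (q i).2 = k
  · simp [h, pow_succ, mul_comm]
  · simp [h]

/-- On any separable infinite-dimensional Hilbert space there exists an operator whose
eigenvalues fill the unit disk, each with an infinite linearly independent eigenfamily. -/
theorem exists_diskOp (H : Type*) [NormedAddCommGroup H] [InnerProductSpace ℂ H]
    [CompleteSpace H] [TopologicalSpace.SeparableSpace H] (hinf : ¬ FiniteDimensional ℂ H) :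
    ∃ T : H →L[ℂ] H, ∀ z : ℂ, ‖z‖ < 1 →
      ∃ v : ℕ → H, LinearIndependent ℂ v ∧ ∀ k, T (v k) = z • v k := by
  obtain ⟨w, b, hb⟩ := exists_hilbertBasis ℂ H
  have hw_orth : Orthonormal ℂ (Subtype.val : w → H) := hb ▸ b.orthonormal
  have hcount : Countable ↥w := by
    apply Pairwise.countable_of_isOpen_disjoint
      (s := fun a : w => Metric.ball (a : H) (1/2))
    · intro a b' hab
      apply Metric.ball_disjoint_ball
      have hn : ‖(a : H) - (b' : H)‖ ^ 2 = 2 := by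
        rw [@norm_sub_sq ℂ]
        rw [hw_orth.2 hab, hw_orth.1 a, hw_orth.1 b']
        norm_num
      have hnn : (0:ℝ) ≤ ‖(a : H) - (b' : H)‖ := norm_nonneg _
      have : (1:ℝ) ≤ ‖(a : H) - (b' : H)‖ := by nlinarith
      rw [dist_eq_norm]
      linarith
    · intro a; exact Metric.isOpen_ball
    · intro a; exact Metric.nonempty_ball.mpr (by norm_num)
  have hinfw : Infinite ↥w := by
    by_contra hfin
    rw [not_infinite_iff_finite] at hfin
    have hwfin : w.Finite := Set.toFinite w
    have hfd : FiniteDimensional ℂ (Submodule.span ℂ w) :=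
      FiniteDimensional.span_of_finite ℂ hwfin
    have hclosed : IsClosed ((Submodule.span ℂ w : Submodule ℂ H) : Set H) :=
      (Submodule.span ℂ w).closed_of_finiteDimensional
    have htop : (Submodule.span ℂ w : Submodule ℂ H) = ⊤ := by
      have hd := b.dense_span
      rw [hb, Subtype.range_coe] at hd
      rw [← hd, hclosed.submodule_topologicalClosure_eq]
    have : FiniteDimensional ℂ (⊤ : Submodule ℂ H) := htop ▸ hfd
    exact hinf ((Submodule.topEquiv (R := ℂ) (M := H)).finiteDimensional)
  obtain ⟨dw⟩ := nonempty_denumerable ↥w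
  let q : ↥w ≃ ℕ × ℕ := (Denumerable.eqv ↥w).trans (Denumerable.eqv (ℕ × ℕ)).symm
  let e := b.repr
  let S := shiftCLM (σq q) (σq_inj q)
  refine ⟨((e.symm.toContinuousLinearEquiv : lp (fun _ : ↥w => ℂ) 2 ≃L[ℂ] H) :
      lp (fun _ : ↥w => ℂ) 2 →L[ℂ] H).comp
    (S.comp ((e.toContinuousLinearEquiv : H ≃L[ℂ] lp (fun _ : ↥w => ℂ) 2) :
      H →L[ℂ] lp (fun _ : ↥w => ℂ) 2)), ?_⟩
  intro z hz
  refine ⟨fun k => e.symm (eig q hz k), ?_, ?_⟩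
  · have hker : LinearMap.ker (e.symm.toLinearEquiv.toLinearMap :
        lp (fun _ : ↥w => ℂ) 2 →ₗ[ℂ] H) = ⊥ :=
      LinearMap.ker_eq_bot.mpr e.symm.injective
    exact (eig_li q hz).map' e.symm.toLinearEquiv.toLinearMap hker
  · intro k
    simp only [ContinuousLinearMap.comp_apply, ContinuousLinearMap.coe_coe]
    show e.symm (S (e (e.symm (eig q hz k)))) = z • e.symm (eig q hz k)
    rw [LinearIsometryEquiv.apply_symm_apply]
    show e.symm (shiftCLM (σq q) (σq_inj q) (eig q hz k)) = _
    rw [shift_eig q hz k, map_smul]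

end UniversalProof

/-- If `U` is universal then there is `r > 0` such that every `λ` with `|λ| < r` is an
eigenvalue of `U` of infinite multiplicity; in particular the ball `B(0,r)` is contained in
the spectrum, and `0` is an interior point of the spectrum, of the point spectrum and of the
essential spectrum of `U`. -/
theorem eigenvalues_of_universal {H : Type*} [NormedAddCommGroup H]
    [InnerProductSpace ℂ H] [CompleteSpace H] [TopologicalSpace.SeparableSpace H]
    (hinf : ¬ FiniteDimensional ℂ H)
    (U : H →L[ℂ] H) (hU : IsUniversal U) :
    ∃ r : ℝ, 0 < r ∧
      (∀ z : ℂ, ‖z‖ < r → ¬ FiniteDimensional ℂ (LinearMap.ker ((U - z • (1 : H →L[ℂ] H) : H →L[ℂ] H) : H →ₗ[ℂ] H))) ∧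
      Metric.ball (0 : ℂ) r ⊆ spectrum ℂ U ∧
      (0 : ℂ) ∈ interior (spectrum ℂ U) ∧
      (0 : ℂ) ∈ interior (pointSpectrum U) ∧
      (0 : ℂ) ∈ interior (essentialSpectrum U) := by
  obtain ⟨T, hT⟩ := UniversalProof.exists_diskOp H hinf
  obtain ⟨M, _hMclosed, _hMinv, c, hc, J, hJ⟩ := hU T
  have hcpos : (0:ℝ) < ‖c‖ := norm_pos_iff.mpr hc
  have hker : ∀ z : ℂ, ‖z‖ < ‖c‖ →
      ¬ FiniteDimensional ℂ (LinearMap.ker ((U - z • (1 : H →L[ℂ] H) : H →L[ℂ] H) : H →ₗ[ℂ] H)) := by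
    intro z hz hfd
    have hzc : ‖z / c‖ < 1 := by
      rw [norm_div, div_lt_one hcpos]; exact hz
    obtain ⟨v, hv_li, hv_eig⟩ := hT (z / c) hzc
    let u : ℕ → H := fun k => (J (v k) : H)
    have humem : ∀ k, u k ∈ LinearMap.ker ((U - z • (1 : H →L[ℂ] H) : H →L[ℂ] H) : H →ₗ[ℂ] H) := by
      intro k
      rw [LinearMap.mem_ker]
      have h1 : U (u k) = c • ((J (T (v k)) : M) : H) := hJ (v k)
      rw [hv_eig k] at h1
      have h2 : ((J ((z / c) • v k) : M) : H) = (z / c) • ((J (v k) : M) : H) := by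
        rw [map_smul]
        rfl
      rw [h2] at h1
      have h3 : U (u k) = z • u k := by
        rw [h1, smul_smul, mul_div_cancel₀ z hc]
      simp [ContinuousLinearMap.sub_apply, ContinuousLinearMap.smul_apply,
        ContinuousLinearMap.one_apply, h3]
    have hu_li : LinearIndependent ℂ u := by
      let f : H →ₗ[ℂ] H := M.subtype.comp ((J : H →L[ℂ] M) : H →ₗ[ℂ] M)
      have hfinj : Function.Injective f := by
        intro x y hxy
        exact J.injective (Subtype.val_injective hxy)
      exact hv_li.map' f (LinearMap.ker_eq_bot.mpr hfinj)
    haveI := hfd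
    let uk : ℕ → LinearMap.ker ((U - z • (1 : H →L[ℂ] H) : H →L[ℂ] H) : H →ₗ[ℂ] H) := fun k => ⟨u k, humem k⟩
    have huk_li : LinearIndependent ℂ uk := by
      apply LinearIndependent.of_comp (LinearMap.ker ((U - z • (1 : H →L[ℂ] H) : H →L[ℂ] H) : H →ₗ[ℂ] H)).subtype
      exact hu_li
    exact absurd huk_li.aleph0_le_rank (not_le.mpr (Module.rank_lt_aleph0 ℂ _))
  have hne : ∀ z : ℂ, ‖z‖ < ‖c‖ → LinearMap.ker ((U - z • (1 : H →L[ℂ] H) : H →L[ℂ] H) : H →ₗ[ℂ] H) ≠ ⊥ := by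
    intro z hz hbot
    apply hker z hz
    rw [hbot]
    infer_instance
  have hspec : Metric.ball (0 : ℂ) ‖c‖ ⊆ spectrum ℂ U := by
    intro z hzb
    have hz : ‖z‖ < ‖c‖ := by simpa [Metric.mem_ball, dist_eq_norm] using hzb
    rw [spectrum.mem_iff]
    intro hunit
    obtain ⟨x, hxmem, hx0⟩ := Submodule.exists_mem_ne_zero_of_ne_bot (hne z hz)
    have hx : (U - z • (1 : H →L[ℂ] H)) x = 0 := LinearMap.mem_ker.mp hxmem
    have hax : (algebraMap ℂ (H →L[ℂ] H) z - U) x = 0 := by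
      have heq : algebraMap ℂ (H →L[ℂ] H) z - U = -(U - z • (1 : H →L[ℂ] H)) := by
        rw [Algebra.algebraMap_eq_smul_one]
        abel
      rw [heq, ContinuousLinearMap.neg_apply, hx, neg_zero]
    obtain ⟨uu, huu⟩ := hunit
    apply hx0
    have h1 : ((↑uu⁻¹ * ↑uu : H →L[ℂ] H)) x = x := by
      rw [uu.inv_mul]
      rfl
    rw [ContinuousLinearMap.mul_apply, huu, hax, map_zero] at h1
    exact h1.symm
  have hpoint : Metric.ball (0 : ℂ) ‖c‖ ⊆ pointSpectrum U := by
    intro z hzb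
    exact hne z (by simpa [Metric.mem_ball, dist_eq_norm] using hzb)
  have hess : Metric.ball (0 : ℂ) ‖c‖ ⊆ essentialSpectrum U := by
    intro z hzb hFred
    exact hker z (by simpa [Metric.mem_ball, dist_eq_norm] using hzb) hFred.1
  refine ⟨‖c‖, hcpos, hker, hspec, ?_, ?_, ?_⟩
  · exact mem_interior.mpr ⟨Metric.ball 0 ‖c‖, hspec, Metric.isOpen_ball,
      Metric.mem_ball_self hcpos⟩
  · exact mem_interior.mpr ⟨Metric.ball 0 ‖c‖, hpoint, Metric.isOpen_ball,
      Metric.mem_ball_self hcpos⟩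
  · exact mem_interior.mpr ⟨Metric.ball 0 ‖c‖, hess, Metric.isOpen_ball,
      Metric.mem_ball_self hcpos⟩

end
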